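/- Let P1, P2, Q1, Q2 : ℝ → ℝ be positive differentiable functions with P2' + Q2' = μ·P1 + μ'·Q1 - r2·(P2+Q2), let N = P1+P2+Q1+Q2 satisfy N' = λ·N, and suppose (P2+Q2)/N = φ is constant with 0 < φ < 1. Define the crude progression rate μ̂ by μ̂·(P1+Q1) = μ·P1 + μ'·Q1. Then μ̂ = (r2 + λ)·φ/(1-φ). -/
import Mathlib


theorem crude_progression_rate
    (P1 P2 Q1 Q2 : ℝ → ℝ) (μ μ' r2 lam φ muhat : ℝ)
    (hP1pos : ∀ t, 0 < P1 t) (hP2pos : ∀ t, 0 < P2 t)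
    (hQ1pos : ∀ t, 0 < Q1 t) (hQ2pos : ∀ t, 0 < Q2 t)
    (hP1 : Differentiable ℝ P1) (hP2 : Differentiable ℝ P2)
    (hQ1 : Differentiable ℝ Q1) (hQ2 : Differentiable ℝ Q2)
    (hflux : ∀ t, deriv P2 t + deriv Q2 t
      = μ * P1 t + μ' * Q1 t - r2 * (P2 t + Q2 t))
    (N : ℝ → ℝ) (hN : N = fun t => P1 t + P2 t + Q1 t + Q2 t)
    (hN' : ∀ t, deriv N t = lam * N t)
    (hφ : ∀ t, (P2 t + Q2 t) / N t = φ) (hφ0 : 0 < φ) (hφ1 : φ < 1)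
    (hmuhat : ∀ t, muhat * (P1 t + Q1 t) = μ * P1 t + μ' * Q1 t) :
    muhat = (r2 + lam) * φ / (1 - φ) := by
  have hNpos : ∀ t, 0 < N t := by
    intro t; rw [hN]
    have := hP1pos t; have := hP2pos t; have := hQ1pos t; have := hQ2pos t
    positivity
  have hM : (fun t => P2 t + Q2 t) = fun t => φ * N t := by
    funext t
    have h := hφ t
    have hne := (hNpos t).ne'
    field_simp at h
    linarith [h]
  have hDN : Differentiable ℝ N := by
    rw [hN]; exact ((hP1.add hP2).add hQ1).add hQ2
  have hderiv : deriv P2 0 + deriv Q2 0 = φ * (lam * N 0) := by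
    have h1 : deriv (fun t => P2 t + Q2 t) 0 = deriv P2 0 + deriv Q2 0 :=
      deriv_add (hP2 0) (hQ2 0)
    have h2 : deriv (fun t => φ * N t) 0 = φ * deriv N 0 :=
      deriv_const_mul φ (hDN 0)
    rw [← h1, hM, h2, hN' 0]
  have hflux0 := hflux 0
  have hmu0 := hmuhat 0
  have hP1Q1 : P1 0 + Q1 0 = (1 - φ) * N 0 := by
    have h := congrFun hM 0
    simp only [hN] at h ⊢
    nlinarith [h]
  have hMN : P2 0 + Q2 0 = φ * N 0 := congrFun hM 0
  have hkey : muhat * ((1 - φ) * N 0) = (r2 + lam) * φ * N 0 := by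
    have hflux' : φ * (lam * N 0) = μ * P1 0 + μ' * Q1 0 - r2 * (φ * N 0) := by
      rw [← hderiv, hflux0, hMN]
    rw [← hP1Q1, hmu0]; linear_combination -hflux'
  have hN0 : N 0 ≠ 0 := ne_of_gt (hNpos 0)
  have h1φ : (1 : ℝ) - φ ≠ 0 := by linarith
  field_simp
  nlinarith [hkey, hNpos 0]
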